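/- Let 0 < α ≤ β and let g : [0,∞) → ℝ satisfy 0 < g(t) ≤ 1 for all t ≥ 0. Define F(r,s,ξ,η) := ‖ξ‖ + g(‖ξ‖)‖P_s η‖ + ‖r P_s η + s⊗ξ‖. Then for every r ∈ [α,β], s ∈ S², ξ ∈ ℝ², and η ∈ ℝ^{3×2}, one has (1/2)‖ξ‖ + (α/2)‖P_s η‖ ≤ F(r,s,ξ,η) ≤ 2‖ξ‖ + √2(1+β)‖η‖. -/

import Mathlib

noncomputable section

abbrev E2 : Type := EuclideanSpace ℝ (Fin 2)
abbrev E3 : Type := EuclideanSpace ℝ (Fin 3)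
abbrev E32 : Type := EuclideanSpace ℝ (Fin 3 × Fin 2)

/-- The tensor product `s ⊗ ξ`, viewed as a 3×2 matrix endowed with the
Frobenius (Euclidean) norm. -/
def tens (s : E3) (ξ : E2) : E32 := WithLp.toLp 2 fun p => s p.1 * ξ p.2

/-- The orthogonal projection `P_s η = (I - s sᵀ) η` of a 3×2 matrix, columnwise,
onto the tangent plane `T_s(S²)`. -/
def Pproj (s : E3) (η : E32) : E32 :=
  WithLp.toLp 2 fun p => η p - s p.1 * ∑ i : Fin 3, s i * η (i, p.2)

/-- The modified integrand
`F(r,s,ξ,η) = ‖ξ‖ + g(‖ξ‖)‖P_s η‖ + ‖r P_s η + s⊗ξ‖`. -/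
def Fdens (g : ℝ → ℝ) (r : ℝ) (s : E3) (ξ : E2) (η : E32) : ℝ :=
  ‖ξ‖ + g ‖ξ‖ * ‖Pproj s η‖ + ‖r • Pproj s η + tens s ξ‖

lemma norm_sq_eq' (ι : Type*) [Fintype ι] (x : EuclideanSpace ℝ ι) :
    ‖x‖ ^ 2 = ∑ i, x i ^ 2 := by
  rw [EuclideanSpace.norm_eq, Real.sq_sqrt (by positivity)]
  simp [sq_abs]

lemma norm_tens (s : E3) (ξ : E2) (hs : ‖s‖ = 1) : ‖tens s ξ‖ = ‖ξ‖ := by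
  have hs2 : ∑ i, s i ^ 2 = 1 := by rw [← norm_sq_eq', hs]; norm_num
  have h1 : ‖tens s ξ‖ ^ 2 = ‖ξ‖ ^ 2 := by
    rw [norm_sq_eq', norm_sq_eq']
    rw [Fintype.sum_prod_type]
    simp only [tens, PiLp.toLp_apply, mul_pow]
    rw [← Finset.sum_mul_sum, hs2, one_mul]
  calc ‖tens s ξ‖ = Real.sqrt (‖tens s ξ‖ ^ 2) := (Real.sqrt_sq (norm_nonneg _)).symm
    _ = Real.sqrt (‖ξ‖ ^ 2) := by rw [h1]
    _ = ‖ξ‖ := Real.sqrt_sq (norm_nonneg _)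

lemma norm_Pproj_le (s : E3) (η : E32) (hs : ‖s‖ = 1) : ‖Pproj s η‖ ≤ ‖η‖ := by
  have hsq : ‖Pproj s η‖ ^ 2 ≤ ‖η‖ ^ 2 := by
    have hs2 : ∑ i, s i ^ 2 = 1 := by rw [← norm_sq_eq', hs]; norm_num
    simp only [Fin.sum_univ_succ, Fin.sum_univ_zero, add_zero] at hs2
    rw [norm_sq_eq', norm_sq_eq']
    simp only [Pproj, PiLp.toLp_apply, Fintype.sum_prod_type, Fin.sum_univ_succ, Fin.sum_univ_zero, add_zero]
    nlinarith [sq_nonneg (s 0 * η (0,0) + s (Fin.succ 0) * η (Fin.succ 0, 0) + s (Fin.succ 0).succ * η ((Fin.succ 0).succ, 0)),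
      sq_nonneg (s 0 * η (0,Fin.succ 0) + s (Fin.succ 0) * η (Fin.succ 0, Fin.succ 0) + s (Fin.succ 0).succ * η ((Fin.succ 0).succ, Fin.succ 0)),
      sq_nonneg (s 0), sq_nonneg (s (Fin.succ 0)), hs2]
  calc ‖Pproj s η‖ = Real.sqrt (‖Pproj s η‖ ^ 2) := (Real.sqrt_sq (norm_nonneg _)).symm
    _ ≤ Real.sqrt (‖η‖ ^ 2) := Real.sqrt_le_sqrt hsq
    _ = ‖η‖ := Real.sqrt_sq (norm_nonneg _)

theorem stmt12 (α β : ℝ) (hα : 0 < α) (hαβ : α ≤ β) (g : ℝ → ℝ)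
    (hg : ∀ t : ℝ, 0 ≤ t → 0 < g t ∧ g t ≤ 1)
    (r : ℝ) (hr : r ∈ Set.Icc α β) (s : E3) (hs : ‖s‖ = 1)
    (ξ : E2) (η : E32) :
    (1/2) * ‖ξ‖ + (α/2) * ‖Pproj s η‖ ≤ Fdens g r s ξ η ∧
      Fdens g r s ξ η ≤ 2 * ‖ξ‖ + Real.sqrt 2 * (1 + β) * ‖η‖ := by
  obtain ⟨hrα, hrβ⟩ := hr
  have hr0 : 0 ≤ r := le_of_lt (lt_of_lt_of_le hα hrα)
  obtain ⟨hg0, hg1⟩ := hg ‖ξ‖ (norm_nonneg ξ)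
  have ht : ‖tens s ξ‖ = ‖ξ‖ := norm_tens s ξ hs
  have hP : ‖Pproj s η‖ ≤ ‖η‖ := norm_Pproj_le s η hs
  have hPn : 0 ≤ ‖Pproj s η‖ := norm_nonneg _
  have hrP : ‖r • Pproj s η‖ = r * ‖Pproj s η‖ := by
    rw [norm_smul, Real.norm_of_nonneg hr0]
  have hgP : 0 ≤ g ‖ξ‖ * ‖Pproj s η‖ := mul_nonneg (le_of_lt hg0) hPn
  constructor
  · -- lower bound
    have h1 : ‖ξ‖ ≤ Fdens g r s ξ η := by
      unfold Fdens
      have := norm_nonneg (r • Pproj s η + tens s ξ)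
      linarith
    have h2 : α * ‖Pproj s η‖ ≤ Fdens g r s ξ η := by
      have hsub : r * ‖Pproj s η‖ ≤ ‖r • Pproj s η + tens s ξ‖ + ‖ξ‖ := by
        calc r * ‖Pproj s η‖ = ‖r • Pproj s η‖ := hrP.symm
          _ = ‖(r • Pproj s η + tens s ξ) - tens s ξ‖ := by rw [add_sub_cancel_right]
          _ ≤ ‖r • Pproj s η + tens s ξ‖ + ‖tens s ξ‖ := norm_sub_le _ _
          _ = ‖r • Pproj s η + tens s ξ‖ + ‖ξ‖ := by rw [ht]
      have hαr : α * ‖Pproj s η‖ ≤ r * ‖Pproj s η‖ :=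
        mul_le_mul_of_nonneg_right hrα hPn
      unfold Fdens
      linarith
    linarith
  · -- upper bound
    have h3 : ‖r • Pproj s η + tens s ξ‖ ≤ r * ‖Pproj s η‖ + ‖ξ‖ := by
      calc ‖r • Pproj s η + tens s ξ‖ ≤ ‖r • Pproj s η‖ + ‖tens s ξ‖ := norm_add_le _ _
        _ = r * ‖Pproj s η‖ + ‖ξ‖ := by rw [hrP, ht]
    have hsqrt2 : (1 : ℝ) ≤ Real.sqrt 2 := by
      nlinarith [Real.sq_sqrt (by norm_num : (2:ℝ) ≥ 0), Real.sqrt_nonneg 2]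
    have hηn : 0 ≤ ‖η‖ := norm_nonneg η
    have h4 : (1 + β) * ‖η‖ ≤ Real.sqrt 2 * (1 + β) * ‖η‖ := by
      nlinarith [mul_nonneg (mul_nonneg (sub_nonneg.mpr hsqrt2) (by linarith : (0:ℝ) ≤ 1 + β)) hηn]
    have h5 : g ‖ξ‖ * ‖Pproj s η‖ ≤ ‖Pproj s η‖ := by nlinarith
    have h6 : r * ‖Pproj s η‖ ≤ β * ‖η‖ := by nlinarith
    have h7 : ‖Pproj s η‖ ≤ ‖η‖ := hP
    unfold Fdens
    linarith

end
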